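/- Let m ≥ 2 be an even natural number. The equation ü − u + u^m = 0 has precisely one homoclinic solution up to translations. This solution is positive everywhere, symmetric about a point z₀, monotone increasing on (−∞, z₀] and monotone decreasing on [z₀, ∞). -/

import Mathlib

open Filter Topology Set

/-- A homoclinic solution of the travelling-wave generalised KdV equation
`ü − u + u^m = 0`: a nonconstant `C²` solution with `u, u̇ → 0` as `z → ±∞`. -/
def IsHomoclinicKdV (m : ℕ) (u : ℝ → ℝ) : Prop :=
  ContDiff ℝ 2 u ∧
  (∀ z : ℝ, deriv (deriv u) z - u z + (u z) ^ m = 0) ∧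
  (∃ z w : ℝ, u z ≠ u w) ∧
  Tendsto u atTop (𝓝 0) ∧ Tendsto u atBot (𝓝 0) ∧
  Tendsto (deriv u) atTop (𝓝 0) ∧ Tendsto (deriv u) atBot (𝓝 0)

noncomputable def kdvA (m : ℕ) : ℝ := ((m:ℝ) - 1)/2
noncomputable def kdvP (m : ℕ) : ℝ := -2/((m:ℝ)-1)
noncomputable def kdvC (m : ℕ) : ℝ := (((m:ℝ)+1)/2) ^ (((m:ℝ)-1)⁻¹)
noncomputable def kdvH (m : ℕ) (z : ℝ) : ℝ := kdvC m * Real.cosh (kdvA m * z) ^ kdvP m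
noncomputable def kdvH' (m : ℕ) (z : ℝ) : ℝ :=
  kdvC m * kdvP m * kdvA m * Real.sinh (kdvA m * z) * Real.cosh (kdvA m * z) ^ (kdvP m - 1)

variable {m : ℕ}

lemma kdv_k_pos (hm : 2 ≤ m) : (0:ℝ) < (m:ℝ) - 1 := by
  have : (2:ℝ) ≤ (m:ℝ) := by exact_mod_cast hm
  linarith

lemma kdvA_pos (hm : 2 ≤ m) : 0 < kdvA m := by
  have := kdv_k_pos hm; unfold kdvA; linarith

lemma kdvP_neg (hm : 2 ≤ m) : kdvP m < 0 := by
  have := kdv_k_pos hm; unfold kdvP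
  exact div_neg_of_neg_of_pos (by norm_num) this
lemma kdvC_pos (hm : 2 ≤ m) : 0 < kdvC m := by
  have : (2:ℝ) ≤ (m:ℝ) := by exact_mod_cast hm
  unfold kdvC; positivity

lemma kdvPA (hm : 2 ≤ m) : kdvP m * kdvA m = -1 := by
  have := kdv_k_pos hm
  unfold kdvP kdvA
  field_simp

lemma kdvPPA (hm : 2 ≤ m) : kdvP m * (kdvP m - 1) * kdvA m ^ 2 = ((m:ℝ)+1)/2 := by
  have h := kdv_k_pos hm
  unfold kdvP kdvA
  field_simp
  ring

lemma kdvPm (hm : 2 ≤ m) : kdvP m * m = kdvP m - 2 := by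
  have h := kdv_k_pos hm
  unfold kdvP
  field_simp
  ring

lemma kdvC_pow_pred (hm : 2 ≤ m) : kdvC m ^ (m - 1) = ((m:ℝ)+1)/2 := by
  have h := kdv_k_pos hm
  have hb : (0:ℝ) < ((m:ℝ)+1)/2 := by linarith
  unfold kdvC
  rw [← Real.rpow_natCast (_ ^ _) (m-1), ← Real.rpow_mul hb.le]
  have : ((m:ℝ)-1)⁻¹ * ((m-1 : ℕ):ℝ) = 1 := by
    have : ((m-1 : ℕ):ℝ) = (m:ℝ) - 1 := by
      have : 1 ≤ m := by omega
      push_cast [this]; ring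
    rw [this]; field_simp
  rw [this, Real.rpow_one]

lemma kdvC_pow (hm : 2 ≤ m) : kdvC m ^ m = ((m:ℝ)+1)/2 * kdvC m := by
  have h1 : kdvC m ^ m = kdvC m ^ (m-1) * kdvC m := by
    rw [← pow_succ]; congr 1; omega
  rw [h1, kdvC_pow_pred hm]


lemma hasDerivAt_kdvH (hm : 2 ≤ m) (z : ℝ) : HasDerivAt (kdvH m) (kdvH' m z) z := by
  have h1 : HasDerivAt (fun z : ℝ => kdvA m * z) (kdvA m) z := by
    simpa using (hasDerivAt_id z).const_mul (kdvA m)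
  have h2 : HasDerivAt (fun z : ℝ => Real.cosh (kdvA m * z)) (Real.sinh (kdvA m * z) * kdvA m) z :=
    (Real.hasDerivAt_cosh _).comp z h1
  have h3 : HasDerivAt (fun x : ℝ => x ^ kdvP m)
      (kdvP m * Real.cosh (kdvA m * z) ^ (kdvP m - 1)) (Real.cosh (kdvA m * z)) :=
    Real.hasDerivAt_rpow_const (Or.inl (Real.cosh_pos _).ne')
  have h4 := (h3.comp z h2).const_mul (kdvC m)
  refine h4.congr_deriv ?_
  unfold kdvH'
  ring

lemma hasDerivAt_kdvH' (hm : 2 ≤ m) (z : ℝ) :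
    HasDerivAt (kdvH' m) (kdvH m z - (kdvH m z) ^ m) z := by
  have h1 : HasDerivAt (fun z : ℝ => kdvA m * z) (kdvA m) z := by
    simpa using (hasDerivAt_id z).const_mul (kdvA m)
  have h2 : HasDerivAt (fun z : ℝ => Real.cosh (kdvA m * z)) (Real.sinh (kdvA m * z) * kdvA m) z :=
    (Real.hasDerivAt_cosh _).comp z h1
  have h2s : HasDerivAt (fun z : ℝ => Real.sinh (kdvA m * z)) (Real.cosh (kdvA m * z) * kdvA m) z :=
    (Real.hasDerivAt_sinh _).comp z h1
  have h3 : HasDerivAt (fun x : ℝ => x ^ (kdvP m - 1))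
      ((kdvP m - 1) * Real.cosh (kdvA m * z) ^ (kdvP m - 1 - 1)) (Real.cosh (kdvA m * z)) :=
    Real.hasDerivAt_rpow_const (Or.inl (Real.cosh_pos _).ne')
  have h4 := ((h3.comp z h2).mul h2s).const_mul (kdvC m * kdvP m * kdvA m)
  have hfun : kdvH' m = fun w : ℝ => kdvC m * kdvP m * kdvA m *
      (((fun x : ℝ => x ^ (kdvP m - 1)) ∘ fun w : ℝ => Real.cosh (kdvA m * w)) w *
        Real.sinh (kdvA m * w)) := by
    funext w
    simp only [Function.comp_apply]
    unfold kdvH'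
    ring
  rw [hfun]
  refine h4.congr_deriv ?_
  symm
  simp only [Function.comp_apply]
  set y := Real.cosh (kdvA m * z) with hy
  set sh := Real.sinh (kdvA m * z) with hsh
  have hy0 : 0 < y := Real.cosh_pos _
  have hsq : sh * sh = y ^ 2 - 1 := by
    rw [hsh, hy, ← Real.sinh_sq]; ring
  have e1 : y ^ (kdvP m - 1) = y ^ (kdvP m - 1 - 1) * y := by
    rw [← Real.rpow_add_one hy0.ne']; ring_nf
  have e2 : y ^ (kdvP m) = y ^ (kdvP m - 1 - 1) * y * y := by
    rw [← Real.rpow_add_one hy0.ne', ← Real.rpow_add_one hy0.ne']; ring_nf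
  have e3 : (kdvH m z) ^ m = ((m:ℝ)+1)/2 * kdvC m * y ^ (kdvP m - 1 - 1) := by
    unfold kdvH
    rw [mul_pow, ← hy, ← Real.rpow_natCast (y ^ kdvP m) m, ← Real.rpow_mul hy0.le,
      kdvC_pow hm, kdvPm hm]
    congr 1
    rw [show kdvP m - 2 = kdvP m - 1 - 1 by ring]
  rw [e3, show kdvH m z = kdvC m * y ^ kdvP m from rfl, e2, e1]
  generalize y ^ (kdvP m - 1 - 1) = w
  have key : (kdvP m - 1) * w * (sh * kdvA m) * sh =
      (kdvP m - 1) * w * kdvA m * (y ^ 2 - 1) := by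
    linear_combination ((kdvP m - 1) * w * kdvA m) * hsq
  rw [key]
  have hk := kdv_k_pos hm
  unfold kdvP kdvA
  field_simp
  ring

lemma deriv_kdvH (hm : 2 ≤ m) : deriv (kdvH m) = kdvH' m := by
  funext z; exact (hasDerivAt_kdvH hm z).deriv

lemma deriv2_kdvH (hm : 2 ≤ m) (z : ℝ) :
    deriv (deriv (kdvH m)) z = kdvH m z - kdvH m z ^ m := by
  rw [deriv_kdvH hm]; exact (hasDerivAt_kdvH' hm z).deriv

lemma contDiff_kdvH (hm : 2 ≤ m) : ContDiff ℝ 2 (kdvH m) := by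
  rw [contDiff_iff_contDiffAt]
  intro z
  have hc : ContDiffAt ℝ 2 (fun z : ℝ => Real.cosh (kdvA m * z)) z :=
    Real.contDiff_cosh.contDiffAt.comp z ((contDiff_const.mul contDiff_id).contDiffAt)
  have hr : ContDiffAt ℝ 2 (fun x : ℝ => x ^ kdvP m) (Real.cosh (kdvA m * z)) :=
    Real.contDiffAt_rpow_const_of_ne (Real.cosh_pos _).ne'
  exact (contDiffAt_const.mul (hr.comp z hc) : ContDiffAt ℝ 2 _ z)

lemma tendsto_cosh_atTop : Tendsto Real.cosh atTop atTop := by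
  apply tendsto_atTop_mono (fun x => ?_) (Real.tendsto_exp_atTop.atTop_div_const two_pos)
  rw [Real.cosh_eq]
  have := Real.exp_pos (-x)
  linarith

lemma kdv_tendsto_cosh_arg_top (hm : 2 ≤ m) :
    Tendsto (fun z : ℝ => Real.cosh (kdvA m * z)) atTop atTop :=
  tendsto_cosh_atTop.comp (tendsto_id.const_mul_atTop (kdvA_pos hm))

lemma kdv_tendsto_cosh_arg_bot (hm : 2 ≤ m) :
    Tendsto (fun z : ℝ => Real.cosh (kdvA m * z)) atBot atTop := by
  have h1 : Tendsto (fun z : ℝ => kdvA m * z) atBot atBot :=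
    tendsto_id.const_mul_atBot (kdvA_pos hm)
  have h2 : Tendsto Real.cosh atBot atTop := by
    have : Real.cosh = Real.cosh ∘ Neg.neg := by funext x; simp [Real.cosh_neg]
    rw [this]
    exact tendsto_cosh_atTop.comp tendsto_neg_atBot_atTop
  exact h2.comp h1

lemma kdv_rpow_tendsto (hm : 2 ≤ m) : Tendsto (fun x : ℝ => x ^ kdvP m) atTop (𝓝 0) := by
  have : kdvP m = -(2/((m:ℝ)-1)) := by unfold kdvP; ring
  rw [this]
  exact tendsto_rpow_neg_atTop (by have := kdv_k_pos hm; positivity)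

lemma kdvH_tendsto_top (hm : 2 ≤ m) : Tendsto (kdvH m) atTop (𝓝 0) := by
  have := ((kdv_rpow_tendsto hm).comp (kdv_tendsto_cosh_arg_top hm)).const_mul (kdvC m)
  simp at this; exact this

lemma kdvH_tendsto_bot (hm : 2 ≤ m) : Tendsto (kdvH m) atBot (𝓝 0) := by
  have := ((kdv_rpow_tendsto hm).comp (kdv_tendsto_cosh_arg_bot hm)).const_mul (kdvC m)
  simp at this; exact this

lemma kdvH'_abs_le (hm : 2 ≤ m) (z : ℝ) :
    ‖kdvH' m z‖ ≤ |kdvC m * kdvP m * kdvA m| * Real.cosh (kdvA m * z) ^ kdvP m := by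
  have hy0 : (0:ℝ) < Real.cosh (kdvA m * z) := Real.cosh_pos _
  unfold kdvH'
  rw [Real.norm_eq_abs, abs_mul, abs_mul]
  have h1 : |Real.cosh (kdvA m * z) ^ (kdvP m - 1)| = Real.cosh (kdvA m * z) ^ (kdvP m - 1) :=
    abs_of_pos (Real.rpow_pos_of_pos hy0 _)
  rw [h1]
  have h2 : |Real.sinh (kdvA m * z)| ≤ Real.cosh (kdvA m * z) := by
    rw [Real.abs_sinh]
    calc Real.sinh |kdvA m * z| ≤ Real.cosh |kdvA m * z| := (Real.sinh_lt_cosh _).le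
    _ = Real.cosh (kdvA m * z) := Real.cosh_abs _
  calc |kdvC m * kdvP m * kdvA m| * |Real.sinh (kdvA m * z)| * Real.cosh (kdvA m * z) ^ (kdvP m - 1)
      ≤ |kdvC m * kdvP m * kdvA m| * Real.cosh (kdvA m * z) * Real.cosh (kdvA m * z) ^ (kdvP m - 1) := by
        apply mul_le_mul_of_nonneg_right (mul_le_mul_of_nonneg_left h2 (abs_nonneg _))
        exact (Real.rpow_pos_of_pos hy0 _).le
    _ = |kdvC m * kdvP m * kdvA m| * Real.cosh (kdvA m * z) ^ kdvP m := by
        rw [mul_assoc, mul_comm (Real.cosh (kdvA m * z)), ← Real.rpow_add_one hy0.ne']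
        ring_nf

lemma kdvH'_tendsto_top (hm : 2 ≤ m) : Tendsto (kdvH' m) atTop (𝓝 0) := by
  apply squeeze_zero_norm (kdvH'_abs_le hm)
  have := ((kdv_rpow_tendsto hm).comp (kdv_tendsto_cosh_arg_top hm)).const_mul
    |kdvC m * kdvP m * kdvA m|
  simpa using this

lemma kdvH'_tendsto_bot (hm : 2 ≤ m) : Tendsto (kdvH' m) atBot (𝓝 0) := by
  apply squeeze_zero_norm (kdvH'_abs_le hm)
  have := ((kdv_rpow_tendsto hm).comp (kdv_tendsto_cosh_arg_bot hm)).const_mul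
    |kdvC m * kdvP m * kdvA m|
  simpa using this

lemma kdvH_pos (hm : 2 ≤ m) (z : ℝ) : 0 < kdvH m z :=
  mul_pos (kdvC_pos hm) (Real.rpow_pos_of_pos (Real.cosh_pos _) _)

lemma kdvCPA_neg (hm : 2 ≤ m) : kdvC m * kdvP m * kdvA m < 0 := by
  have := kdvC_pos hm
  have h2 := kdvPA hm
  nlinarith

lemma kdvH'_pos (hm : 2 ≤ m) {z : ℝ} (hz : z < 0) : 0 < kdvH' m z := by
  have h1 : Real.sinh (kdvA m * z) < 0 := by
    rw [Real.sinh_neg_iff]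
    exact mul_neg_of_pos_of_neg (kdvA_pos hm) hz
  have h2 : (0:ℝ) < Real.cosh (kdvA m * z) ^ (kdvP m - 1) :=
    Real.rpow_pos_of_pos (Real.cosh_pos _) _
  have h3 := kdvCPA_neg hm
  unfold kdvH'
  exact mul_pos (mul_pos_of_neg_of_neg h3 h1) h2

lemma kdvH'_neg (hm : 2 ≤ m) {z : ℝ} (hz : 0 < z) : kdvH' m z < 0 := by
  have h1 : 0 < Real.sinh (kdvA m * z) := by
    rw [Real.sinh_pos_iff]
    exact mul_pos (kdvA_pos hm) hz
  have h2 : (0:ℝ) < Real.cosh (kdvA m * z) ^ (kdvP m - 1) :=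
    Real.rpow_pos_of_pos (Real.cosh_pos _) _
  have h3 := kdvCPA_neg hm
  unfold kdvH'
  exact mul_neg_of_neg_of_pos (mul_neg_of_neg_of_pos h3 h1) h2

lemma kdvH_strictMonoOn (hm : 2 ≤ m) : StrictMonoOn (kdvH m) (Iic 0) := by
  apply strictMonoOn_of_deriv_pos (convex_Iic 0)
    (contDiff_kdvH hm).continuous.continuousOn
  intro x hx
  rw [interior_Iic] at hx
  rw [deriv_kdvH hm]
  exact kdvH'_pos hm hx

lemma kdvH_strictAntiOn (hm : 2 ≤ m) : StrictAntiOn (kdvH m) (Ici 0) := by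
  apply strictAntiOn_of_deriv_neg (convex_Ici 0)
    (contDiff_kdvH hm).continuous.continuousOn
  intro x hx
  rw [interior_Ici] at hx
  rw [deriv_kdvH hm]
  exact kdvH'_neg hm hx

lemma kdvH_symm (m : ℕ) (z : ℝ) : kdvH m (0 + z) = kdvH m (0 - z) := by
  unfold kdvH
  rw [zero_add, zero_sub, mul_neg, Real.cosh_neg]

lemma kdvH_isHomoclinic (hm : 2 ≤ m) : IsHomoclinicKdV m (kdvH m) := by
  refine ⟨contDiff_kdvH hm, fun z => by rw [deriv2_kdvH hm]; ring, ?_, kdvH_tendsto_top hm,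
    kdvH_tendsto_bot hm, ?_, ?_⟩
  · exact ⟨-1, 0, ((kdvH_strictMonoOn hm) (by norm_num : (-1:ℝ) ∈ Iic 0)
      (le_refl (0:ℝ) : (0:ℝ) ∈ Iic 0) (by norm_num)).ne⟩
  · rw [deriv_kdvH hm]; exact kdvH'_tendsto_top hm
  · rw [deriv_kdvH hm]; exact kdvH'_tendsto_bot hm

lemma kdvH_zero (hm : 2 ≤ m) : kdvH m 0 = kdvC m := by
  unfold kdvH
  rw [mul_zero, Real.cosh_zero, Real.one_rpow, mul_one]

lemma kdvH'_zero (hm : 2 ≤ m) : kdvH' m 0 = 0 := by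
  unfold kdvH'
  rw [mul_zero, Real.sinh_zero]
  ring

lemma kdvH_le (hm : 2 ≤ m) (z : ℝ) : kdvH m z ≤ kdvC m := by
  unfold kdvH
  calc kdvC m * Real.cosh (kdvA m * z) ^ kdvP m ≤ kdvC m * 1 := by
        apply mul_le_mul_of_nonneg_left _ (kdvC_pos hm).le
        exact Real.rpow_le_one_of_one_le_of_nonpos (Real.one_le_cosh _) (kdvP_neg hm).le
    _ = kdvC m := mul_one _

section uniq

variable {u : ℝ → ℝ}

/-- Smoothness unpacking. -/
lemma kdv_smooth (hC2 : ContDiff ℝ 2 u) :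
    Differentiable ℝ u ∧ Differentiable ℝ (deriv u) ∧ Continuous (deriv (deriv u)) := by
  have h2 : ContDiff ℝ ((1:ℕ∞) + 1) u := hC2.of_le (by norm_num)
  rw [contDiff_succ_iff_deriv] at h2
  obtain ⟨hd, -, h1⟩ := h2
  have h1' : ContDiff ℝ 1 (deriv u) := by exact_mod_cast h1
  rw [contDiff_one_iff_deriv] at h1'
  exact ⟨hd, h1'.1, h1'.2⟩

/-- Energy identity for homoclinic solutions. -/
lemma kdv_energy (hm : 2 ≤ m) (hu : IsHomoclinicKdV m u) (z : ℝ) :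
    (deriv u z) ^ 2 = (u z) ^ 2 - (2/((m:ℝ)+1)) * (u z) ^ (m+1) := by
  obtain ⟨hC2, heq, hnc, htt, htb, hdt, hdb⟩ := hu
  obtain ⟨hd, hd1, hc2⟩ := kdv_smooth hC2
  have hODE : ∀ z, deriv (deriv u) z = u z - u z ^ m := fun z => by
    have := heq z; linarith
  set E : ℝ → ℝ := fun z => (deriv u z) ^ 2 - (u z) ^ 2 + (2/((m:ℝ)+1)) * (u z) ^ (m+1)
    with hE
  have hm1 : ((m:ℝ) + 1) ≠ 0 := by positivity
  have hEderiv : ∀ x, HasDerivAt E 0 x := by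
    intro x
    have h1 : HasDerivAt (fun z => (deriv u z) ^ 2)
        (2 * deriv u x ^ 1 * deriv (deriv u) x) x := ((hd1 x).hasDerivAt).pow 2
    have h2 : HasDerivAt (fun z => (u z) ^ 2) (2 * u x ^ 1 * deriv u x) x :=
      ((hd x).hasDerivAt).pow 2
    have h3 : HasDerivAt (fun z => (u z) ^ (m+1))
        ((m+1 : ℕ) * u x ^ m * deriv u x) x := by
      simpa [Pi.pow_def] using ((hd x).hasDerivAt).pow (m+1)
    have h4 := (h1.sub h2).add (h3.const_mul (2/((m:ℝ)+1)))
    refine h4.congr_deriv ?_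
    symm
    rw [hODE x]
    push_cast
    field_simp
    ring
  have hEconst : ∀ x, E x = E 0 := fun x =>
    is_const_of_deriv_eq_zero (fun y => (hEderiv y).differentiableAt)
      (fun y => (hEderiv y).deriv) x 0
  have hElim : Tendsto E atTop (𝓝 0) := by
    have h1 := (hdt.pow 2).sub (htt.pow 2)
    have h2 := (htt.pow (m+1)).const_mul (2/((m:ℝ)+1))
    have := h1.add h2
    simpa using this
  have hE0 : E 0 = 0 := by
    have : Tendsto E atTop (𝓝 (E 0)) := by
      have hfun : E = fun _ => E 0 := funext hEconst
      rw [hfun]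
      exact tendsto_const_nhds
    exact tendsto_nhds_unique this hElim
  have := hEconst z
  rw [hE0] at this
  simp only [hE] at this
  linarith

/-- A homoclinic solution takes a positive value somewhere (m even). -/
lemma kdv_exists_pos (hm : 2 ≤ m) (hmeven : Even m) (hu : IsHomoclinicKdV m u) :
    ∃ z, 0 < u z := by
  by_contra hcon
  push_neg at hcon
  obtain ⟨hC2, heq, hnc, htt, htb, hdt, hdb⟩ := hu
  obtain ⟨hd, hd1, hc2⟩ := kdv_smooth hC2
  have hODE : ∀ z, deriv (deriv u) z = u z - u z ^ m := fun z => by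
    have := heq z; linarith
  have hconc : ∀ z, deriv (deriv u) z ≤ 0 := by
    intro z
    rw [hODE z]
    have := hmeven.pow_nonneg (u z)
    have := hcon z
    linarith
  have hant : Antitone (deriv u) := antitone_of_deriv_nonpos hd1 hconc
  have hzero : ∀ z, deriv u z = 0 := by
    intro z
    have h1 : 0 ≤ deriv u z :=
      le_of_tendsto hdt (eventually_atTop.mpr ⟨z, fun x hx => hant hx⟩)
    have h2 : deriv u z ≤ 0 :=
      ge_of_tendsto hdb (eventually_atBot.mpr ⟨z, fun x hx => hant hx⟩)
    linarith
  obtain ⟨z, w, hzw⟩ := hnc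
  exact hzw (is_const_of_deriv_eq_zero hd hzero z w)

/-- The solution attains a global max with value kdvC, zero derivative. -/
lemma kdv_max (hm : 2 ≤ m) (hmeven : Even m) (hu : IsHomoclinicKdV m u) :
    ∃ z₂, u z₂ = kdvC m ∧ deriv u z₂ = 0 ∧ ∀ z, u z ≤ u z₂ := by
  obtain ⟨z1, hz1⟩ := kdv_exists_pos hm hmeven hu
  obtain ⟨hC2, heq, hnc, htt, htb, hdt, hdb⟩ := hu
  obtain ⟨hd, hd1, hc2⟩ := kdv_smooth hC2
  obtain ⟨B, hB⟩ := eventually_atTop.mp (htt.eventually_lt_const hz1)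
  obtain ⟨A, hA⟩ := eventually_atBot.mp (htb.eventually_lt_const hz1)
  have hz1mem : z1 ∈ Icc A B := by
    constructor
    · by_contra hc; push_neg at hc; exact absurd (hA z1 hc.le) (lt_irrefl _)
    · by_contra hc; push_neg at hc; exact absurd (hB z1 hc.le) (lt_irrefl _)
  obtain ⟨z₂, hz₂mem, hmax⟩ := isCompact_Icc.exists_isMaxOn ⟨z1, hz1mem⟩
    hd.continuous.continuousOn
  have hglob : ∀ z, u z ≤ u z₂ := by
    intro z
    by_cases hz : z ∈ Icc A B
    · exact hmax hz
    · have : u z < u z1 := by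
        rcases not_and_or.mp hz with h | h
        · push_neg at h; exact hA z h.le
        · push_neg at h; exact hB z h.le
      exact this.le.trans (hmax hz1mem)
  have hd0 : deriv u z₂ = 0 := by
    apply IsLocalMax.deriv_eq_zero
    exact IsMaxOn.isLocalMax (fun z _ => hglob z : IsMaxOn u univ z₂) univ_mem
  have hu2pos : 0 < u z₂ := lt_of_lt_of_le hz1 (hglob z1)
  have hen := kdv_energy hm ⟨hC2, heq, hnc, htt, htb, hdt, hdb⟩ z₂
  rw [hd0] at hen
  -- 0 = u₂² − (2/(m+1)) u₂^{m+1}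
  have hm1 : (0:ℝ) < (m:ℝ) + 1 := by positivity
  have hpow : u z₂ ^ (m+1) = u z₂ ^ (m-1) * u z₂ ^ 2 := by
    rw [← pow_add]; congr 1; omega
  rw [hpow] at hen
  have hval : u z₂ ^ (m-1) = ((m:ℝ)+1)/2 := by
    have h2 : (0:ℝ) < u z₂ ^ 2 := by positivity
    have : (2/((m:ℝ)+1)) * u z₂ ^ (m-1) = 1 := by
      field_simp at hen ⊢
      nlinarith [hen]
    field_simp at this
    linarith
  have : u z₂ = kdvC m := by
    have hinj := (pow_left_strictMonoOn₀ (M₀ := ℝ) (show m - 1 ≠ 0 by omega)).injOn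
    apply hinj (by simp [hu2pos.le]) (by simp [(kdvC_pos hm).le])
    show u z₂ ^ (m-1) = kdvC m ^ (m-1)
    rw [hval, kdvC_pow_pred hm]
  exact ⟨z₂, this, hd0, hglob⟩

/-- Nonnegativity of homoclinic solutions for even m. -/
lemma kdv_nonneg (hm : 2 ≤ m) (hmeven : Even m) (hu : IsHomoclinicKdV m u) (z₃ : ℝ) :
    0 ≤ u z₃ := by
  by_contra hcon
  push_neg at hcon
  obtain ⟨hC2, heq, hnc, htt, htb, hdt, hdb⟩ := hu
  obtain ⟨hd, hd1, hc2⟩ := kdv_smooth hC2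
  obtain ⟨B, hB⟩ := eventually_atTop.mp (htt.eventually_const_lt hcon)
  obtain ⟨A, hA⟩ := eventually_atBot.mp (htb.eventually_const_lt hcon)
  have hz3mem : z₃ ∈ Icc A B := by
    constructor
    · by_contra hc; push_neg at hc; exact absurd (hA z₃ hc.le) (lt_irrefl _)
    · by_contra hc; push_neg at hc; exact absurd (hB z₃ hc.le) (lt_irrefl _)
  obtain ⟨z₄, hz₄mem, hmin⟩ := isCompact_Icc.exists_isMinOn ⟨z₃, hz3mem⟩
    hd.continuous.continuousOn
  have hglob : ∀ z, u z₄ ≤ u z := by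
    intro z
    by_cases hz : z ∈ Icc A B
    · exact hmin hz
    · have : u z₃ < u z := by
        rcases not_and_or.mp hz with h | h
        · push_neg at h; exact hA z h.le
        · push_neg at h; exact hB z h.le
      exact (hmin hz3mem).trans this.le
  have hd0 : deriv u z₄ = 0 := by
    apply IsLocalMin.deriv_eq_zero
    exact IsMinOn.isLocalMin (fun z _ => hglob z : IsMinOn u univ z₄) univ_mem
  have hu4neg : u z₄ < 0 := lt_of_le_of_lt (hglob z₃) hcon
  have hen := kdv_energy hm ⟨hC2, heq, hnc, htt, htb, hdt, hdb⟩ z₄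
  rw [hd0] at hen
  have hpow : u z₄ ^ (m+1) = u z₄ ^ (m-1) * u z₄ ^ 2 := by
    rw [← pow_add]; congr 1; omega
  rw [hpow] at hen
  have hm1 : (0:ℝ) < (m:ℝ) + 1 := by positivity
  have hval : u z₄ ^ (m-1) = ((m:ℝ)+1)/2 := by
    have h2 : (0:ℝ) < u z₄ ^ 2 := pow_two_pos_of_ne_zero hu4neg.ne
    have : (2/((m:ℝ)+1)) * u z₄ ^ (m-1) = 1 := by
      field_simp at hen ⊢
      nlinarith [hen]
    field_simp at this
    linarith
  have hodd : Odd (m - 1) := Nat.Even.sub_odd (by omega) hmeven odd_one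
  have := hodd.pow_neg hu4neg
  rw [hval] at this
  linarith

/-- The vector field of the first-order system, Lipschitz on a strip. -/
lemma kdv_lipschitz (hm : 2 ≤ m) (R : ℝ) (hR : 0 ≤ R) :
    ∃ K : NNReal, LipschitzOnWith K (fun p : ℝ × ℝ => (p.2, p.1 - p.1 ^ m))
      ((Icc (-R) R) ×ˢ (univ : Set ℝ)) := by
  set L : NNReal := ‖(1 + (m:ℝ) * R ^ (m-1))‖₊ with hL
  have hg : LipschitzOnWith L (fun x : ℝ => x - x ^ m) (Icc (-R) R) := by
    apply (convex_Icc _ _).lipschitzOnWith_of_nnnorm_hasDerivWithin_le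
      (f' := fun x => 1 - (m:ℝ) * x ^ (m-1))
    · intro x hx
      exact ((hasDerivAt_id x).sub (hasDerivAt_pow m x)).hasDerivWithinAt
    · intro x hx
      rw [← NNReal.coe_le_coe, coe_nnnorm, coe_nnnorm, Real.norm_eq_abs, Real.norm_eq_abs]
      have hxR : |x| ≤ R := abs_le.mpr ⟨hx.1, hx.2⟩
      have h1 : |x ^ (m-1)| ≤ R ^ (m-1) := by
        rw [abs_pow]
        exact pow_le_pow_left₀ (abs_nonneg _) hxR _
      have h2 : (0:ℝ) ≤ (m:ℝ) * R ^ (m-1) := by positivity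
      rw [abs_of_nonneg (by linarith : (0:ℝ) ≤ 1 + (m:ℝ) * R ^ (m-1))]
      calc |1 - (m:ℝ) * x ^ (m-1)| ≤ |1| + |(m:ℝ) * x ^ (m-1)| := abs_sub _ _
        _ = 1 + (m:ℝ) * |x ^ (m-1)| := by rw [abs_one, abs_mul, Nat.abs_cast]
        _ ≤ 1 + (m:ℝ) * R ^ (m-1) := by
            have : (m:ℝ) * |x ^ (m-1)| ≤ (m:ℝ) * R ^ (m-1) :=
              mul_le_mul_of_nonneg_left h1 (Nat.cast_nonneg m)
            linarith
  have hsnd : LipschitzOnWith 1 (fun p : ℝ × ℝ => p.2) ((Icc (-R) R) ×ˢ (univ : Set ℝ)) :=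
    LipschitzWith.prod_snd.lipschitzOnWith
  have hfst : LipschitzOnWith (L * 1) ((fun x : ℝ => x - x ^ m) ∘ Prod.fst)
      ((Icc (-R) R) ×ˢ (univ : Set ℝ)) :=
    hg.comp (LipschitzWith.prod_fst.lipschitzOnWith) (fun p hp => hp.1)
  exact ⟨1 ⊔ (L * 1), hsnd.prodMk hfst⟩

/-- Uniqueness up to translation. -/
lemma kdv_unique (hm : 2 ≤ m) (hmeven : Even m) (hu : IsHomoclinicKdV m u) :
    ∃ c : ℝ, u = fun z => kdvH m (z + c) := by
  obtain ⟨z₂, hz₂val, hz₂d, hz₂max⟩ := kdv_max hm hmeven hu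
  have hnonneg := kdv_nonneg hm hmeven hu
  have hen := kdv_energy hm hu
  obtain ⟨hC2, heq, hnc, htt, htb, hdt, hdb⟩ := hu
  obtain ⟨hd, hd1, hc2⟩ := kdv_smooth hC2
  have hODE : ∀ z, deriv (deriv u) z = u z - u z ^ m := fun z => by
    have := heq z; linarith
  set R := kdvC m with hRdef
  have hR : 0 ≤ R := (kdvC_pos hm).le
  obtain ⟨K, hK⟩ := kdv_lipschitz hm R hR
  set v : ℝ → ℝ × ℝ → ℝ × ℝ := fun _ p => (p.2, p.1 - p.1 ^ m) with hv
  set s : ℝ → Set (ℝ × ℝ) := fun _ => (Icc (-R) R) ×ˢ (univ : Set ℝ) with hs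
  have hvlip : ∀ t, LipschitzOnWith K (v t) (s t) := fun t => hK
  set f : ℝ → ℝ × ℝ := fun t => (u t, deriv u t) with hf
  set g : ℝ → ℝ × ℝ := fun t => (kdvH m (t - z₂), kdvH' m (t - z₂)) with hg
  have hfd : ∀ t, HasDerivAt f (v t (f t)) t := by
    intro t
    have h1 : HasDerivAt u (deriv u t) t := (hd t).hasDerivAt
    have h2 : HasDerivAt (deriv u) (deriv (deriv u) t) t := (hd1 t).hasDerivAt
    have := h1.prodMk h2
    rw [hODE t] at this
    exact this
  have hgd : ∀ t, HasDerivAt g (v t (g t)) t := by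
    intro t
    have hsub : HasDerivAt (fun w : ℝ => w - z₂) 1 t := (hasDerivAt_id t).sub_const z₂
    have h1 : HasDerivAt (fun w : ℝ => kdvH m (w - z₂)) (kdvH' m (t - z₂)) t := by
      simpa [Function.comp_def] using (hasDerivAt_kdvH hm (t - z₂)).comp t hsub
    have h2 : HasDerivAt (fun w : ℝ => kdvH' m (w - z₂))
        (kdvH m (t - z₂) - kdvH m (t - z₂) ^ m) t := by
      simpa [Function.comp_def] using (hasDerivAt_kdvH' hm (t - z₂)).comp t hsub
    exact h1.prodMk h2
  have hfs : ∀ t, f t ∈ s t := by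
    intro t
    refine ⟨⟨?_, ?_⟩, trivial⟩
    · exact le_trans (by linarith [kdvC_pos hm, hnonneg t] : -R ≤ 0) (hnonneg t)
    · exact (hz₂max t).trans (le_of_eq hz₂val)
  have hgs : ∀ t, g t ∈ s t := by
    intro t
    refine ⟨⟨?_, ?_⟩, trivial⟩
    · have := kdvH_pos hm (t - z₂)
      have := kdvC_pos hm
      simp only [hg]
      linarith
    · exact kdvH_le hm _
  have hinit : f z₂ = g z₂ := by
    simp only [hf, hg, sub_self]
    rw [kdvH_zero hm, kdvH'_zero hm, hz₂val, hz₂d]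
  have heqn : ∀ t, f t = g t := by
    intro t
    set b : ℝ := |t| + |z₂| + 1 with hb
    have hbt : t ∈ Icc (-b) b := by
      constructor <;> [skip; skip] <;>
        · cases abs_cases t with
          | inl h => cases abs_cases z₂ with
            | inl h2 => simp [hb]; linarith [abs_nonneg t, abs_nonneg z₂, h.1, h2.1]
            | inr h2 => simp [hb]; linarith [abs_nonneg t, abs_nonneg z₂]
          | inr h => cases abs_cases z₂ with
            | inl h2 => simp [hb]; linarith [abs_nonneg t, abs_nonneg z₂]
            | inr h2 => simp [hb]; linarith [abs_nonneg t, abs_nonneg z₂]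
    have hz₂mem : z₂ ∈ Ioo (-b) b := by
      constructor
      · cases abs_cases z₂ with
        | inl h => simp [hb]; linarith [abs_nonneg t, abs_nonneg z₂, h.1]
        | inr h => simp [hb]; linarith [abs_nonneg t, abs_nonneg z₂]
      · cases abs_cases z₂ with
        | inl h => simp [hb]; linarith [abs_nonneg t, abs_nonneg z₂]
        | inr h => simp [hb]; linarith [abs_nonneg t, abs_nonneg z₂]
    have := ODE_solution_unique_of_mem_Icc (fun t _ => hvlip t) hz₂mem
      (fun x _ => (hfd x).continuousAt.continuousWithinAt)
      (fun x _ => hfd x) (fun x _ => hfs x)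
      (fun x _ => (hgd x).continuousAt.continuousWithinAt)
      (fun x _ => hgd x) (fun x _ => hgs x) hinit
    exact this hbt
  refine ⟨-z₂, ?_⟩
  funext z
  have := heqn z
  have h1 : u z = kdvH m (z - z₂) := congrArg Prod.fst this
  rw [h1]
  ring_nf

end uniq

/-- For even `m ≥ 2` the equation `ü − u + u^m = 0` has precisely one homoclinic
solution up to translations; it is positive, symmetric about a point `z₀`,
monotone increasing on `(−∞, z₀]` and monotone decreasing on `[z₀, ∞)`. -/
theorem kdv_homoclinic_even (m : ℕ) (hm : 2 ≤ m) (hmeven : Even m) :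
    ∃ (h : ℝ → ℝ) (z₀ : ℝ),
      IsHomoclinicKdV m h ∧
      (∀ z : ℝ, 0 < h z) ∧
      (∀ z : ℝ, h (z₀ + z) = h (z₀ - z)) ∧
      MonotoneOn h (Set.Iic z₀) ∧
      AntitoneOn h (Set.Ici z₀) ∧
      (∀ u : ℝ → ℝ, IsHomoclinicKdV m u → ∃ c : ℝ, u = fun z => h (z + c)) :=
  ⟨kdvH m, 0, kdvH_isHomoclinic hm, kdvH_pos hm, kdvH_symm m,
    (kdvH_strictMonoOn hm).monotoneOn, (kdvH_strictAntiOn hm).antitoneOn,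
    fun u hu => kdv_unique hm hmeven hu⟩
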